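/- For fixed q : X × A → ℝ and any kernel Q depending continuously on a parameter θ in a topological space Θ, with the soft value function v_{θ} defined as the unique fixed point of the soft Bellman operator T_{θ,λ}, the map θ ↦ v_{θ} is continuous (in sup norm). Consequently the softmax best-response policy π_{θ,λ}(a|x) = exp(Q_{θ,λ}(x,a)/λ)/∑_b exp(Q_{θ,λ}(x,b)/λ), where Q_{θ,λ}(x,a) = r(x,a) + β ∑_{x'} Q_θ(x'|x,a) v_θ(x'), is continuous in θ. -/

import Mathlib

open Finset Real

/-- One-sided Lipschitz bound for log-sum-exp. -/
lemma lse_le_aux {A : Type*} [Fintype A] [Nonempty A] (lam : ℝ) (hlam : 0 < lam)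
    (y z : A → ℝ) (M : ℝ) (h : ∀ a, y a ≤ z a + M) :
    lam * Real.log (∑ a, Real.exp (y a / lam)) ≤
      lam * Real.log (∑ a, Real.exp (z a / lam)) + M := by
  have hz : 0 < ∑ a, Real.exp (z a / lam) :=
    Finset.sum_pos (fun a _ => Real.exp_pos _) Finset.univ_nonempty
  have hy : 0 < ∑ a, Real.exp (y a / lam) :=
    Finset.sum_pos (fun a _ => Real.exp_pos _) Finset.univ_nonempty
  have hle : (∑ a, Real.exp (y a / lam)) ≤
      (∑ a, Real.exp (z a / lam)) * Real.exp (M / lam) := by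
    rw [Finset.sum_mul]
    refine Finset.sum_le_sum fun a _ => ?_
    rw [← Real.exp_add, ← add_div]
    exact Real.exp_le_exp.mpr (by gcongr; exact h a)
  calc lam * Real.log (∑ a, Real.exp (y a / lam))
      ≤ lam * Real.log ((∑ a, Real.exp (z a / lam)) * Real.exp (M / lam)) := by
        refine mul_le_mul_of_nonneg_left ?_ hlam.le
        exact Real.log_le_log hy hle
    _ = lam * Real.log (∑ a, Real.exp (z a / lam)) + M := by
        rw [Real.log_mul hz.ne' (Real.exp_pos _).ne', Real.log_exp, mul_add,
          mul_div_cancel₀ _ hlam.ne']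

/-- Two-sided Lipschitz bound for log-sum-exp. -/
lemma lse_lip {A : Type*} [Fintype A] [Nonempty A] (lam : ℝ) (hlam : 0 < lam)
    (y z : A → ℝ) (M : ℝ) (h : ∀ a, |y a - z a| ≤ M) :
    |lam * Real.log (∑ a, Real.exp (y a / lam)) -
      lam * Real.log (∑ a, Real.exp (z a / lam))| ≤ M := by
  rw [abs_sub_le_iff]
  constructor
  · have := lse_le_aux lam hlam y z M (fun a => by
      have := abs_le.mp (h a); linarith [this.2])
    linarith
  · have := lse_le_aux lam hlam z y M (fun a => by
      have := abs_le.mp (h a); linarith [this.1])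
    linarith

/-- the soft value function `θ ↦ v_θ` is continuous, and so is the
softmax best-response policy. -/
theorem soft_value_and_softmax_policy_continuous
    {X A : Type*} [Fintype X] [Fintype A] [Nonempty X] [Nonempty A]
    {Θ : Type*} [TopologicalSpace Θ]
    (β lam : ℝ) (hβ : β ∈ Set.Ioo (0:ℝ) 1) (hlam : 0 < lam)
    (r : X → A → ℝ)
    (Q : Θ → X → A → X → ℝ)
    (hQnn : ∀ θ x a x', 0 ≤ Q θ x a x')
    (hQsum : ∀ θ x a, ∑ x', Q θ x a x' = 1)
    (hQcont : ∀ x a x', Continuous fun θ => Q θ x a x')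
    (v : Θ → X → ℝ)
    (hv : ∀ θ x, v θ x =
      lam * Real.log (∑ a, Real.exp ((r x a + β * ∑ x', Q θ x a x' * v θ x') / lam))) :
    Continuous v
    ∧ Continuous (fun θ => fun x a =>
        Real.exp ((r x a + β * ∑ x', Q θ x a x' * v θ x') / lam)
          / ∑ b, Real.exp ((r x b + β * ∑ x', Q θ x b x' * v θ x') / lam)) := by
  obtain ⟨hβ0, hβ1⟩ := hβ
  have h1β : 0 < 1 - β := by linarith
  -- continuity of each coordinate of v
  have hvc : ∀ x, Continuous fun θ => v θ x := by
    intro x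
    rw [continuous_iff_continuousAt]
    intro θ₀
    -- the error term
    set E : Θ → ℝ := fun θ =>
      ∑ x : X, ∑ a : A, |∑ x', (Q θ x a x' - Q θ₀ x a x') * v θ₀ x'| with hE
    have hEcont : Continuous E := by
      refine continuous_finset_sum _ fun x _ => continuous_finset_sum _ fun a _ => ?_
      refine Continuous.abs (continuous_finset_sum _ fun x' _ => ?_)
      exact (((hQcont x a x').sub continuous_const).mul continuous_const)
    have hE0 : E θ₀ = 0 := by
      simp [hE]
    have hEnn : ∀ θ, 0 ≤ E θ :=
      fun θ => Finset.sum_nonneg fun x _ => Finset.sum_nonneg fun a _ => abs_nonneg _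
    -- the sup-distance
    set D : Θ → ℝ := fun θ =>
      Finset.univ.sup' Finset.univ_nonempty (fun x => |v θ x - v θ₀ x|) with hD
    have hDle : ∀ θ x, |v θ x - v θ₀ x| ≤ D θ :=
      fun θ x => Finset.le_sup' (fun x => |v θ x - v θ₀ x|) (Finset.mem_univ x)
    -- key contraction estimate
    have key : ∀ θ x, |v θ x - v θ₀ x| ≤ β * D θ + β * E θ := by
      intro θ x
      rw [hv θ x, hv θ₀ x]
      refine lse_lip lam hlam _ _ _ fun a => ?_
      have hsplit : (r x a + β * ∑ x', Q θ x a x' * v θ x') -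
          (r x a + β * ∑ x', Q θ₀ x a x' * v θ₀ x') =
          β * ((∑ x', Q θ x a x' * (v θ x' - v θ₀ x')) +
            ∑ x', (Q θ x a x' - Q θ₀ x a x') * v θ₀ x') := by
        have h0 : ∀ x' : X, Q θ x a x' * (v θ x' - v θ₀ x') +
            (Q θ x a x' - Q θ₀ x a x') * v θ₀ x' =
            Q θ x a x' * v θ x' - Q θ₀ x a x' * v θ₀ x' := fun x' => by ring
        rw [← Finset.sum_add_distrib, Finset.sum_congr rfl (fun x' _ => h0 x'),
          Finset.sum_sub_distrib]
        ring
      rw [hsplit, abs_mul, abs_of_pos hβ0]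
      calc β * |(∑ x', Q θ x a x' * (v θ x' - v θ₀ x')) +
            ∑ x', (Q θ x a x' - Q θ₀ x a x') * v θ₀ x'|
          ≤ β * (|∑ x', Q θ x a x' * (v θ x' - v θ₀ x')| +
            |∑ x', (Q θ x a x' - Q θ₀ x a x') * v θ₀ x'|) := by
            exact mul_le_mul_of_nonneg_left (abs_add_le _ _) hβ0.le
        _ ≤ β * D θ + β * E θ := by
            rw [mul_add]
            refine add_le_add ?_ ?_
            · refine mul_le_mul_of_nonneg_left ?_ hβ0.le
              calc |∑ x', Q θ x a x' * (v θ x' - v θ₀ x')|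
                  ≤ ∑ x', |Q θ x a x' * (v θ x' - v θ₀ x')| := Finset.abs_sum_le_sum_abs _ _
                _ ≤ ∑ x', Q θ x a x' * D θ := by
                    refine Finset.sum_le_sum fun x' _ => ?_
                    rw [abs_mul, abs_of_nonneg (hQnn θ x a x')]
                    exact mul_le_mul_of_nonneg_left (hDle θ x') (hQnn θ x a x')
                _ = D θ := by rw [← Finset.sum_mul, hQsum, one_mul]
            · refine mul_le_mul_of_nonneg_left ?_ hβ0.le
              calc |∑ x', (Q θ x a x' - Q θ₀ x a x') * v θ₀ x'|
                  ≤ ∑ a : A, |∑ x', (Q θ x a x' - Q θ₀ x a x') * v θ₀ x'| :=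
                    Finset.single_le_sum
                    (f := fun b => |∑ x', (Q θ x b x' - Q θ₀ x b x') * v θ₀ x'|)
                    (fun b _ => abs_nonneg _) (Finset.mem_univ a)
                _ ≤ E θ := Finset.single_le_sum
                    (f := fun x => ∑ a : A, |∑ x', (Q θ x a x' - Q θ₀ x a x') * v θ₀ x'|)
                    (fun b _ => Finset.sum_nonneg fun a _ => abs_nonneg _) (Finset.mem_univ x)
    have hDbound : ∀ θ, D θ ≤ β * E θ / (1 - β) := by
      intro θ
      have h1 : D θ ≤ β * D θ + β * E θ :=
        Finset.sup'_le _ _ fun x _ => key θ x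
      rw [le_div_iff₀ h1β]
      nlinarith
    -- squeeze
    have htend : Filter.Tendsto (fun θ => |v θ x - v θ₀ x|) (nhds θ₀) (nhds 0) := by
      refine squeeze_zero (fun θ => abs_nonneg _)
        (fun θ => (hDle θ x).trans (hDbound θ)) ?_
      have : Filter.Tendsto (fun θ => β * E θ / (1 - β)) (nhds θ₀)
          (nhds (β * E θ₀ / (1 - β))) :=
        ((continuous_const.mul hEcont).div_const (1 - β)).tendsto θ₀
      simpa [hE0] using this
    have : Filter.Tendsto (fun θ => v θ x) (nhds θ₀) (nhds (v θ₀ x)) := by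
      rw [tendsto_iff_dist_tendsto_zero]
      simpa [Real.dist_eq] using htend
    exact this
  have hvC : Continuous v := continuous_pi hvc
  refine ⟨hvC, ?_⟩
  refine continuous_pi fun x => continuous_pi fun a => ?_
  have hterm : ∀ b : A, Continuous fun θ =>
      Real.exp ((r x b + β * ∑ x', Q θ x b x' * v θ x') / lam) := by
    intro b
    refine Real.continuous_exp.comp (Continuous.div_const ?_ lam)
    exact continuous_const.add (continuous_const.mul (continuous_finset_sum _ fun x' _ =>
      (hQcont x b x').mul (hvc x')))
  refine (hterm a).div (continuous_finset_sum _ fun b _ => hterm b) fun θ => ?_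
  exact (Finset.sum_pos (fun b _ => Real.exp_pos _) Finset.univ_nonempty).ne'
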